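/- Let ρ < 0. For a real m×n feedback matrix F define the tracking error ε(ξ₀, t) := (C + D·F) · exp(t·(A + B·F)) · ξ₀ ∈ ℝ^p for ξ₀ ∈ ℝ^n and t ≥ 0, where exp denotes the matrix exponential. Then the following two conditions on F are equivalent: (i) [global ρ-monotonicity] A + B·F is Hurwitz (every complex eigenvalue of A + B·F has negative real part) and for every ξ₀ ∈ ℝ^n and every k ∈ {1,…,p} there exists β ≥ 0 such that |ε(ξ₀,t)_k| ≤ β·exp(ρ·t) for all t ≥ 0 and the function t ↦ ε(ξ₀,t)_k is monotone (nondecreasing or nonincreasing) on [0,∞); (ii) [single-mode outputs] A + B·F is Hurwitz and there exist real numbers λ₁,…,λ_p with λ_k ≤ ρ for every k, such that for every ξ₀ ∈ ℝ^n there exist real coefficients β₁,…,β_p with ε(ξ₀,t)_k = β_k·exp(λ_k·t) for all t ≥ 0 and all k ∈ {1,…,p}. -/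

import Mathlib

/-- The continuous-time tracking error `ε(ξ₀,t) = (C+DF)·exp(t(A+BF))·ξ₀`. -/
noncomputable def trackErrC {n m p : ℕ} (A : Matrix (Fin n) (Fin n) ℝ)
    (B : Matrix (Fin n) (Fin m) ℝ) (C : Matrix (Fin p) (Fin n) ℝ)
    (D : Matrix (Fin p) (Fin m) ℝ) (F : Matrix (Fin m) (Fin n) ℝ)
    (ξ₀ : Fin n → ℝ) (t : ℝ) : Fin p → ℝ :=
  (C + D * F).mulVec ((NormedSpace.exp (t • (A + B * F))).mulVec ξ₀)

/-- `M` is Hurwitz: every complex eigenvalue (root of the characteristic polynomial of the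
complexification) has negative real part. -/
def IsHurwitz {n : ℕ} (M : Matrix (Fin n) (Fin n) ℝ) : Prop :=
  ∀ z : ℂ, (Matrix.charpoly (M.map Complex.ofReal)).IsRoot z → z.re < 0

open Matrix Set Filter

namespace TrackAux

variable {n p : ℕ}

noncomputable def err (Cf : Matrix (Fin p) (Fin n) ℝ) (M : Matrix (Fin n) (Fin n) ℝ)
    (ξ₀ : Fin n → ℝ) (t : ℝ) : Fin p → ℝ :=
  Cf.mulVec ((NormedSpace.exp (t • M)).mulVec ξ₀)

lemma err_zero (Cf : Matrix (Fin p) (Fin n) ℝ) (M : Matrix (Fin n) (Fin n) ℝ)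
    (ξ₀ : Fin n → ℝ) : err Cf M ξ₀ 0 = Cf.mulVec ξ₀ := by
  simp [err, NormedSpace.exp_zero]

lemma err_combo (Cf : Matrix (Fin p) (Fin n) ℝ) (M : Matrix (Fin n) (Fin n) ℝ)
    (a b : ℝ) (ξ₀ η₀ : Fin n → ℝ) (t : ℝ) (k : Fin p) :
    err Cf M (a • ξ₀ + b • η₀) t k = a * err Cf M ξ₀ t k + b * err Cf M η₀ t k := by
  simp [err, Matrix.mulVec_add, Matrix.mulVec_smul, Pi.add_apply, Pi.smul_apply, smul_eq_mul]

lemma err_shift (Cf : Matrix (Fin p) (Fin n) ℝ) (M : Matrix (Fin n) (Fin n) ℝ)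
    (η₀ : Fin n → ℝ) (t₀ t : ℝ) :
    err Cf M ((NormedSpace.exp (t₀ • M)).mulVec η₀) t = err Cf M η₀ (t + t₀) := by
  have h : (NormedSpace.exp (t • M)) *ᵥ ((NormedSpace.exp (t₀ • M)) *ᵥ η₀)
      = (NormedSpace.exp ((t + t₀) • M)) *ᵥ η₀ := by
    rw [Matrix.mulVec_mulVec, ← Matrix.exp_add_of_commute _ _
      (((Commute.refl M).smul_left t).smul_right t₀), ← add_smul]
  rw [err, err, h]

lemma err_hasDerivAt (Cf : Matrix (Fin p) (Fin n) ℝ) (M : Matrix (Fin n) (Fin n) ℝ)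
    (ξ₀ : Fin n → ℝ) (t : ℝ) (k : Fin p) :
    HasDerivAt (fun s => err Cf M ξ₀ s k) (err Cf M (M.mulVec ξ₀) t k) t := by
  letI : SeminormedRing (Matrix (Fin n) (Fin n) ℝ) := Matrix.linftyOpSemiNormedRing
  letI : NormedRing (Matrix (Fin n) (Fin n) ℝ) := Matrix.linftyOpNormedRing
  letI : NormedAlgebra ℝ (Matrix (Fin n) (Fin n) ℝ) := Matrix.linftyOpNormedAlgebra
  have hexp : HasDerivAt (fun s : ℝ => NormedSpace.exp (s • M))
      (NormedSpace.exp (t • M) * M) t := hasDerivAt_exp_smul_const M t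
  have hL : IsLinearMap ℝ (fun X : Matrix (Fin n) (Fin n) ℝ => Cf.mulVec (X.mulVec ξ₀) k) := by
    constructor
    · intro X Y; simp [Matrix.add_mulVec, Matrix.mulVec_add, Pi.add_apply]
    · intro c X; simp [Matrix.smul_mulVec, Matrix.mulVec_smul, Pi.smul_apply, smul_eq_mul]
  let L : Matrix (Fin n) (Fin n) ℝ →ₗ[ℝ] ℝ := hL.mk' _
  have hLc : Continuous L := LinearMap.continuous_of_finiteDimensional L
  have hLd : HasFDerivAt L (LinearMap.toContinuousLinearMap L)
      (NormedSpace.exp (t • M)) := (LinearMap.toContinuousLinearMap L).hasFDerivAt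
  have := hLd.comp_hasDerivAt t hexp
  have h2 : err Cf M (M.mulVec ξ₀) t k
      = L (NormedSpace.exp (t • M) * M) := by
    simp only [err, L, IsLinearMap.mk'_apply, Matrix.mulVec_mulVec]
  rw [h2]
  exact this


lemma key (Cf : Matrix (Fin p) (Fin n) ℝ) (M : Matrix (Fin n) (Fin n) ℝ)
    (ρ : ℝ) (hρ : ρ < 0)
    (H : ∀ (ξ₀ : Fin n → ℝ) (k : Fin p), ∃ β : ℝ, 0 ≤ β ∧
        (∀ t : ℝ, 0 ≤ t → |err Cf M ξ₀ t k| ≤ β * Real.exp (ρ * t)) ∧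
        (MonotoneOn (fun t : ℝ => err Cf M ξ₀ t k) (Set.Ici (0 : ℝ)) ∨
         AntitoneOn (fun t : ℝ => err Cf M ξ₀ t k) (Set.Ici (0 : ℝ))))
    (k : Fin p) :
    ∃ lam : ℝ, lam ≤ ρ ∧ ∀ (ξ₀ : Fin n → ℝ) (t : ℝ), 0 ≤ t →
      err Cf M ξ₀ t k = err Cf M ξ₀ 0 k * Real.exp (lam * t) := by
  -- Step 1: every trajectory component has constant sign on [0,∞)
  have hsign : ∀ (ξ₀ : Fin n → ℝ) (s t : ℝ), 0 ≤ s → 0 ≤ t →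
      0 ≤ err Cf M ξ₀ s k * err Cf M ξ₀ t k := by
    intro ξ₀ s t hs ht
    obtain ⟨β, hβ, hbound, hmono⟩ := H ξ₀ k
    have htend : Tendsto (fun u => err Cf M ξ₀ u k) atTop (nhds 0) := by
      have h1 : Tendsto (fun u : ℝ => ρ * u) atTop atBot :=
        (tendsto_const_mul_atBot_of_neg hρ).2 tendsto_id
      have h2 : Tendsto (fun u : ℝ => β * Real.exp (ρ * u)) atTop (nhds 0) := by
        simpa using (Real.tendsto_exp_atBot.comp h1).const_mul β
      refine squeeze_zero_norm' ?_ h2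
      filter_upwards [eventually_ge_atTop (0:ℝ)] with u hu
      simpa [Real.norm_eq_abs] using hbound u hu
    rcases hmono with hm | hm
    · have hle : ∀ u : ℝ, 0 ≤ u → err Cf M ξ₀ u k ≤ 0 := by
        intro u hu
        refine ge_of_tendsto htend ?_
        filter_upwards [eventually_ge_atTop u] with v hv
        exact hm hu (le_trans hu hv) hv
      have := mul_nonneg (neg_nonneg.2 (hle s hs)) (neg_nonneg.2 (hle t ht))
      simpa [neg_mul_neg] using this
    · have hge : ∀ u : ℝ, 0 ≤ u → 0 ≤ err Cf M ξ₀ u k := by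
        intro u hu
        refine le_of_tendsto htend ?_
        filter_upwards [eventually_ge_atTop u] with v hv
        exact hm hu (le_trans hu hv) hv
      exact mul_nonneg (hge s hs) (hge t ht)
  -- Step 2: pairwise linear dependence of trajectory values
  have hdep : ∀ (ξ₀ η₀ : Fin n → ℝ) (s t : ℝ), 0 ≤ s → 0 ≤ t →
      err Cf M ξ₀ s k * err Cf M η₀ t k = err Cf M ξ₀ t k * err Cf M η₀ s k := by
    intro ξ₀ η₀ s t hs ht
    by_contra hne
    set fs := err Cf M ξ₀ s k; set ft := err Cf M ξ₀ t k
    set gs := err Cf M η₀ s k; set gt := err Cf M η₀ t k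
    have hd : fs * gt - ft * gs ≠ 0 := sub_ne_zero.2 hne
    set d := fs * gt - ft * gs
    set a := (gt + gs) / d
    set b := -((ft + fs) / d)
    have h1 : err Cf M (a • ξ₀ + b • η₀) s k = 1 := by
      rw [err_combo]
      show a * fs + b * gs = 1
      have e : a * fs + b * gs = (gt * fs + gs * fs - (ft + fs) * gs) / d := by simp only [a, b]; ring
      rw [e, div_eq_iff hd]; simp only [d]; ring
    have h2 : err Cf M (a • ξ₀ + b • η₀) t k = -1 := by
      rw [err_combo]
      show a * ft + b * gt = -1
      have e : a * ft + b * gt = (gt * ft + gs * ft - (ft + fs) * gt) / d := by simp only [a, b]; ring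
      rw [e, div_eq_iff hd]; simp only [d]; ring
    have := hsign (a • ξ₀ + b • η₀) s t hs ht
    rw [h1, h2] at this
    linarith
  by_cases hz : ∀ (ξ₀ : Fin n → ℝ) (t : ℝ), 0 ≤ t → err Cf M ξ₀ t k = 0
  · exact ⟨ρ, le_refl ρ, fun ξ₀ t ht => by
      rw [hz ξ₀ t ht, hz ξ₀ 0 le_rfl, zero_mul]⟩
  push_neg at hz
  obtain ⟨η₀, t₀, ht₀, hne⟩ := hz
  set η : Fin n → ℝ := (NormedSpace.exp (t₀ • M)).mulVec η₀ with hη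
  have hη0 : err Cf M η 0 k ≠ 0 := by
    rw [hη, err_shift, zero_add]; exact hne
  set c := err Cf M η 0 k with hc
  set lam := err Cf M (M.mulVec η) 0 k / c with hlam
  have hode : ∀ t : ℝ, 0 ≤ t → err Cf M (M.mulVec η) t k = lam * err Cf M η t k := by
    intro t ht
    have h := hdep (M.mulVec η) η 0 t le_rfl ht
    have hrw : err Cf M (M *ᵥ η) t k * err Cf M η 0 k / c = err Cf M (M *ᵥ η) t k := by
      rw [← hc, mul_div_assoc, div_self hη0, mul_one]
    rw [hlam, div_mul_eq_mul_div, h, hrw]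
  have hexp : ∀ t : ℝ, 0 ≤ t → err Cf M η t k = c * Real.exp (lam * t) := by
    intro t ht
    set φ : ℝ → ℝ := fun u => err Cf M η u k * Real.exp (-(lam * u)) with hφ
    have hφd : ∀ u : ℝ, 0 ≤ u → HasDerivAt φ 0 u := by
      intro u hu
      have h1 := err_hasDerivAt Cf M η u k
      have hlin : HasDerivAt (fun v : ℝ => -(lam * v)) (-lam) u := by
        simpa using (hasDerivAt_id u).const_mul (-lam)
      have h2 := hlin.exp
      have h3 := h1.mul h2
      refine HasDerivAt.congr_deriv h3 ?_
      rw [hode u hu]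
      ring
    have hcont : ContinuousOn φ (Icc 0 t) := fun u hu =>
      (hφd u hu.1).continuousAt.continuousWithinAt
    have hconst := constant_of_has_deriv_right_zero hcont
      (fun u hu => (hφd u hu.1).hasDerivWithinAt) t
      (right_mem_Icc.2 ht)
    have hφt : err Cf M η t k * Real.exp (-(lam * t)) = c := by
      have : φ t = φ 0 := hconst
      simpa [hφ, hc] using this
    calc err Cf M η t k
        = (err Cf M η t k * Real.exp (-(lam * t))) * Real.exp (lam * t) := by
          rw [mul_assoc, ← Real.exp_add]; simp
      _ = c * Real.exp (lam * t) := by rw [hφt]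
  have hlamρ : lam ≤ ρ := by
    by_contra hlt
    push_neg at hlt
    obtain ⟨β, hβ0, hbound, _⟩ := H η k
    have hcabs : 0 < |c| := abs_pos.2 hη0
    have hK : ∀ t : ℝ, 0 ≤ t → |c| * Real.exp (lam * t) ≤ β * Real.exp (ρ * t) := by
      intro t ht
      have h := hbound t ht
      rw [hexp t ht, abs_mul, Real.abs_exp] at h
      exact h
    have h1 : Tendsto (fun t : ℝ => (lam - ρ) * t) atTop atTop :=
      tendsto_const_mul_atTop_of_pos (by linarith) |>.2 tendsto_id
    have h2 := (Real.tendsto_exp_atTop.comp h1).eventually_gt_atTop (β / |c|)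
    obtain ⟨t, hgt, ht0⟩ := (h2.and (eventually_ge_atTop (0:ℝ))).exists
    have hb := hK t ht0
    have hgt' : β / |c| < Real.exp (lam * t) / Real.exp (ρ * t) := by
      have : β / |c| < Real.exp ((lam - ρ) * t) := hgt
      rwa [sub_mul, Real.exp_sub] at this
    rw [div_lt_div_iff₀ hcabs (Real.exp_pos _)] at hgt'
    linarith
  refine ⟨lam, hlamρ, fun ξ₀ t ht => ?_⟩
  have h := hdep ξ₀ η t 0 ht le_rfl
  rw [hexp 0 le_rfl] at h
  have h2 : err Cf M ξ₀ t k * c = (err Cf M ξ₀ 0 k * Real.exp (lam * t)) * c := by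
    have h3 := hexp t ht
    rw [h3] at h
    simp only [mul_zero, Real.exp_zero, mul_one] at h
    linear_combination h
  exact mul_right_cancel₀ hη0 h2

end TrackAux

open TrackAux in
theorem TrackAux.main_aux
    (n m p : ℕ) (Q : Prop)
    (A : Matrix (Fin n) (Fin n) ℝ) (B : Matrix (Fin n) (Fin m) ℝ)
    (C : Matrix (Fin p) (Fin n) ℝ) (D : Matrix (Fin p) (Fin m) ℝ)
    (ρ : ℝ) (hρ : ρ < 0) (F : Matrix (Fin m) (Fin n) ℝ) :
    (Q ∧
      ∀ (ξ₀ : Fin n → ℝ) (k : Fin p), ∃ β : ℝ, 0 ≤ β ∧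
        (∀ t : ℝ, 0 ≤ t → |err (C + D * F) (A + B * F) ξ₀ t k| ≤ β * Real.exp (ρ * t)) ∧
        (MonotoneOn (fun t : ℝ => err (C + D * F) (A + B * F) ξ₀ t k) (Set.Ici (0 : ℝ)) ∨
         AntitoneOn (fun t : ℝ => err (C + D * F) (A + B * F) ξ₀ t k) (Set.Ici (0 : ℝ))))
    ↔
    (Q ∧
      ∃ lam : Fin p → ℝ, (∀ k, lam k ≤ ρ) ∧
        ∀ ξ₀ : Fin n → ℝ, ∃ β : Fin p → ℝ,
          ∀ t : ℝ, 0 ≤ t → ∀ k : Fin p,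
            err (C + D * F) (A + B * F) ξ₀ t k = β k * Real.exp (lam k * t)) := by
  constructor
  · rintro ⟨hH, H⟩
    refine ⟨hH, ?_⟩
    have hkey := fun k => key (C + D * F) (A + B * F) ρ hρ H k
    choose lam hlam hmode using hkey
    exact ⟨lam, hlam, fun ξ₀ => ⟨fun k => err (C + D * F) (A + B * F) ξ₀ 0 k,
      fun t ht k => hmode k ξ₀ t ht⟩⟩
  · rintro ⟨hH, lam, hlam, H⟩
    refine ⟨hH, fun ξ₀ k => ?_⟩
    obtain ⟨β, hβ⟩ := H ξ₀
    refine ⟨|β k|, abs_nonneg _, ?_, ?_⟩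
    · intro t ht
      rw [hβ t ht k, abs_mul, Real.abs_exp]
      have : Real.exp (lam k * t) ≤ Real.exp (ρ * t) :=
        Real.exp_le_exp.2 (mul_le_mul_of_nonneg_right (hlam k) ht)
      exact mul_le_mul_of_nonneg_left this (abs_nonneg _)
    · rcases le_or_gt 0 (β k) with hb | hb
      · right
        intro s hs t ht hst
        dsimp only
        rw [hβ s hs k, hβ t ht k]
        have : Real.exp (lam k * t) ≤ Real.exp (lam k * s) := by
          apply Real.exp_le_exp.2
          have hlk : lam k ≤ 0 := le_trans (hlam k) (le_of_lt hρ)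
          exact mul_le_mul_of_nonpos_left hst hlk
        exact mul_le_mul_of_nonneg_left this hb
      · left
        intro s hs t ht hst
        dsimp only
        rw [hβ s hs k, hβ t ht k]
        have : Real.exp (lam k * t) ≤ Real.exp (lam k * s) := by
          apply Real.exp_le_exp.2
          have hlk : lam k ≤ 0 := le_trans (hlam k) (le_of_lt hρ)
          exact mul_le_mul_of_nonpos_left hst hlk
        exact mul_le_mul_of_nonpos_left this (le_of_lt hb)


theorem global_monotonicity_iff_single_mode_continuous
    (n m p : ℕ) (hn : 0 < n) (hm : 0 < m) (hp : 0 < p)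
    (A : Matrix (Fin n) (Fin n) ℝ) (B : Matrix (Fin n) (Fin m) ℝ)
    (C : Matrix (Fin p) (Fin n) ℝ) (D : Matrix (Fin p) (Fin m) ℝ)
    (ρ : ℝ) (hρ : ρ < 0) (F : Matrix (Fin m) (Fin n) ℝ) :
    (IsHurwitz (A + B * F) ∧
      ∀ (ξ₀ : Fin n → ℝ) (k : Fin p), ∃ β : ℝ, 0 ≤ β ∧
        (∀ t : ℝ, 0 ≤ t → |trackErrC A B C D F ξ₀ t k| ≤ β * Real.exp (ρ * t)) ∧
        (MonotoneOn (fun t : ℝ => trackErrC A B C D F ξ₀ t k) (Set.Ici (0 : ℝ)) ∨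
         AntitoneOn (fun t : ℝ => trackErrC A B C D F ξ₀ t k) (Set.Ici (0 : ℝ))))
    ↔
    (IsHurwitz (A + B * F) ∧
      ∃ lam : Fin p → ℝ, (∀ k, lam k ≤ ρ) ∧
        ∀ ξ₀ : Fin n → ℝ, ∃ β : Fin p → ℝ,
          ∀ t : ℝ, 0 ≤ t → ∀ k : Fin p,
            trackErrC A B C D F ξ₀ t k = β k * Real.exp (lam k * t)) := by
  have hE : trackErrC A B C D F = TrackAux.err (C + D * F) (A + B * F) := rfl
  rw [hE]
  exact TrackAux.main_aux n m p (IsHurwitz (A + B * F)) A B C D ρ hρ F
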